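/- If C is a sublist of A witnessed by index sequence I, and a contiguous block of C equals P occupying indices i_q, ..., i_{q+r-1} in I, then replacing that block of indices by the compact appearance of P in A starting at i_q yields another valid witness that C is a sublist of A (Lemma 1 of the paper, single-sequence version). -/

import Mathlib

set_option maxHeartbeats 1000000

/-- Maximum length of a common sublist (LCS length) of `X` and `Y`. -/
def LLCS {σ : Type} [DecidableEq σ] (X Y : List σ) : ℕ :=
  ((X.sublists.filter (fun C => decide (C.Sublist Y))).map List.length).foldr max 0

/-- `I` is an appearance (embedding witness) of `P` in `A`: a strictly increasing
list of (0-based) indices realizing `P` as a sublist of `A`. -/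
def IsApp {σ : Type} (A P : List σ) (I : List ℕ) : Prop :=
  I.Chain' (· < ·) ∧ I.length = P.length ∧ ∀ t, t < I.length → A[I.getD t 0]? = P[t]?

/-- A greedy (compact) appearance: each next index is the least possible one. -/
def IsGreedy {σ : Type} (A P : List σ) (I : List ℕ) : Prop :=
  IsApp A P I ∧ ∀ t, t + 1 < I.length → ∀ k, I.getD t 0 < k → A[k]? = P[t+1]? →
    I.getD (t+1) 0 ≤ k

private lemma isApp_iff_map {σ : Type} (A P : List σ) (I : List ℕ) :
    IsApp A P I ↔ I.Chain' (· < ·) ∧ I.map (fun i => A[i]?) = P.map some := by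
  unfold IsApp
  refine and_congr_right fun _ => ?_
  constructor
  · rintro ⟨hlen, h⟩
    apply List.ext_getElem (by simpa using hlen)
    intro t h1 h2
    simp only [List.getElem_map]
    have ht : t < I.length := by simpa using h1
    have htP : t < P.length := by simpa using h2
    have := h t ht
    rw [List.getD_eq_getElem _ _ ht,
        List.getElem?_eq_getElem htP] at this
    exact this
  · intro h
    have hlen : I.length = P.length := by
      have := congrArg List.length h; simpa using this
    refine ⟨hlen, fun t ht => ?_⟩
    have htP : t < P.length := hlen ▸ ht
    have := congrArg (fun l => l[t]?) h
    simp only [List.getElem?_map, List.getElem?_eq_getElem ht,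
        List.getElem?_eq_getElem htP, Option.map_some] at this
    rw [List.getD_eq_getElem _ _ ht, List.getElem?_eq_getElem htP]
    exact Option.some_injective _ this

theorem stmt14 {σ : Type} (A C P al ga : List σ) (hC : C = al ++ P ++ ga)
    (I I' : List ℕ) (hI : IsApp A C I)
    (hI' : IsGreedy A P I') (hhead : I'.head? = I[al.length]?) :
    IsApp A C (I.take al.length ++ I' ++ I.drop (al.length + P.length)) := by
  rcases hI' with ⟨hI'app, hgreedy⟩
  rw [isApp_iff_map] at hI hI'app ⊢
  obtain ⟨hIc, hImap⟩ := hI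
  obtain ⟨hI'c, hI'map⟩ := hI'app
  have hClen : C.length = al.length + P.length + ga.length := by simp [hC]; omega
  have hIlen : I.length = al.length + P.length + ga.length := by
    have := congrArg List.length hImap
    simp only [List.length_map] at this
    omega
  have hI'len : I'.length = P.length := by
    have := congrArg List.length hI'map
    simpa using this
  -- values of I
  have hIval : ∀ t (ht : t < I.length), A[I[t]]? = C[t]? := by
    intro t ht
    have htC : t < C.length := by omega
    have := congrArg (fun l => l[t]?) hImap
    simp only [List.getElem?_map, List.getElem?_eq_getElem ht,
        List.getElem?_eq_getElem htC, Option.map_some] at this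
    rw [List.getElem?_eq_getElem htC]
    exact Option.some_injective _ this
  -- value of C inside the P block
  have hCval : ∀ s, s < P.length → C[(al.length + s)]? = P[s]? := by
    intro s hs
    rw [hC]
    rw [List.getElem?_append_left (by simp; omega),
        List.getElem?_append_right (by simp)]
    congr 1
    simp
  have hImono : ∀ i j (_ : i < j) (hj : j < I.length), I[i]'(by omega) < I[j] := by
    intro i j hij hj
    exact (List.pairwise_iff_getElem.mp (List.isChain_iff_pairwise.mp hIc)) i j (by omega) hj hij
  have hI'mono : ∀ i j (_ : i ≤ j) (hj : j < I'.length), I'[i]'(by omega) ≤ I'[j] := by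
    intro i j hij hj
    rcases eq_or_lt_of_le hij with rfl | h
    · exact le_refl _
    · exact le_of_lt ((List.pairwise_iff_getElem.mp
        (List.isChain_iff_pairwise.mp hI'c)) i j (by omega) hj h)
  rcases Nat.eq_zero_or_pos P.length with hr0 | hrpos
  · -- P empty : I' empty, splice = I
    have hI'nil : I' = [] := List.length_eq_zero_iff.mp (by omega)
    subst hI'nil
    rw [hr0, Nat.add_zero]
    simp only [List.append_nil, List.take_append_drop]
    exact ⟨hIc, hImap⟩
  -- now P nonempty
  have hqI : al.length < I.length := by omega
  have hhead' : I'[0]'(by omega) = I[al.length] := by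
    rw [List.head?_eq_getElem?, List.getElem?_eq_getElem (by omega),
        List.getElem?_eq_getElem hqI] at hhead
    exact Option.some_injective _ hhead
  -- key lemma: greedy stays at or before the original indices
  have key : ∀ t (ht : t < P.length),
      I'[t]'(by omega) ≤ I[al.length + t]'(by omega) := by
    intro t
    induction t with
    | zero => intro _; simp only [Nat.add_zero]; exact le_of_eq hhead'
    | succ t ih =>
      intro ht
      have ht' : t < P.length := by omega
      have h1 : I'[t]'(by omega) < I[al.length + t + 1]'(by omega) :=
        lt_of_le_of_lt (ih ht') (hImono (al.length + t) (al.length + t + 1) (by omega) (by omega))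
      have h2 : A[(I[al.length + t + 1]'(by omega))]? = P[t + 1]? := by
        rw [hIval (al.length + t + 1) (by omega),
            show al.length + t + 1 = al.length + (t + 1) by omega]
        exact hCval (t + 1) ht
      have hle := hgreedy t (by omega) (I[al.length + t + 1]'(by omega))
        (lt_of_le_of_lt (le_of_eq (List.getD_eq_getElem I' 0 (show t < I'.length by omega))) h1)
        h2
      calc I'[t + 1]'(by omega) = I'.getD (t + 1) 0 :=
              (List.getD_eq_getElem I' 0 (show t + 1 < I'.length by omega)).symm
        _ ≤ I[al.length + (t + 1)]'(by omega) := hle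
  constructor
  · -- chain'
    refine List.isChain_iff_pairwise.mpr ?_
    have hpI : I.Pairwise (· < ·) := List.isChain_iff_pairwise.mp hIc
    rw [List.pairwise_append, List.pairwise_append]
    refine ⟨⟨hpI.sublist (List.take_sublist _ _), List.isChain_iff_pairwise.mp hI'c, ?_⟩,
            hpI.sublist (List.drop_sublist _ _), ?_⟩
    · -- take al.length vs I'
      intro x hx y hy
      obtain ⟨j, hj, rfl⟩ := List.mem_take_iff_getElem.mp hx
      obtain ⟨t, ht, rfl⟩ := List.mem_iff_getElem.mp hy
      have hjq : j < al.length := by omega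
      calc I[j]'(by omega) < I[al.length] := hImono j al.length hjq hqI
        _ = I'[0]'(by omega) := hhead'.symm
        _ ≤ I'[t] := hI'mono 0 t (by omega) ht
    · -- take ++ I' vs drop
      intro x hx y hy
      obtain ⟨s, hs, rfl⟩ := List.mem_drop_iff_getElem.mp hy
      rcases List.mem_append.mp hx with hx | hx
      · obtain ⟨j, hj, rfl⟩ := List.mem_take_iff_getElem.mp hx
        exact hImono j ((al.length + P.length) + s) (by omega) (by omega)
      · obtain ⟨t, ht, rfl⟩ := List.mem_iff_getElem.mp hx
        have ht' : t < P.length := by omega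
        calc I'[t] ≤ I[al.length + t]'(by omega) := key t ht'
          _ < I[(al.length + P.length) + s] :=
              hImono (al.length + t) ((al.length + P.length) + s) (by omega) (by omega)
  · -- values via map
    rw [List.map_append, List.map_append, List.map_take, List.map_drop, hImap, hI'map]
    conv_rhs => rw [hC]
    rw [hC, List.map_append, List.map_append]
    rw [List.take_append_of_le_length (by simp), List.take_left' (by simp),
        List.drop_left' (by simp)]
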